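/- Let S ⊆ F_3^3 be a set of 9 vectors such that for any two distinct elements of S, their Hamming distance is at least 2, i.e., fixing any two coordinates determines the third coordinate among members of S. If in addition S contains two elements at Hamming distance exactly 2, then S is, up to permuting symbols in each coordinate, equal to {x ∈ F_3^3 : x_1 + x_2 + x_3 = 0}. -/

import Mathlib

set_option synthInstance.maxSize 2000 in
set_option synthInstance.maxHeartbeats 1000000 in
lemma key6 : ∀ p q r s t u : ZMod 3,
    p ≠ q → p ≠ r → q ≠ r → s ≠ t → s ≠ u → t ≠ u →
    (0:ZMod 3) ≠ p → p ≠ s → (0:ZMod 3) ≠ s →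
    (-1:ZMod 3) ≠ q → q ≠ t → (-1:ZMod 3) ≠ t →
    (-2:ZMod 3) ≠ r → r ≠ u → (-2:ZMod 3) ≠ u →
    q = p - 1 ∧ r = p - 2 ∧ t = s - 1 ∧ u = s - 2 := by decide

open scoped Classical BigOperators

lemma latin_iso (f : ZMod 3 → ZMod 3 → ZMod 3)
    (hrow : ∀ a, Function.Injective (f a))
    (hcol : ∀ b, Function.Injective (fun a => f a b)) :
    ∃ σ0 σ1 σ2 : Equiv.Perm (ZMod 3), ∀ a b, σ0 a + σ1 b + σ2 (f a b) = 0 := by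
  have b2 : Function.Bijective (f 0) := Finite.injective_iff_bijective.1 (hrow 0)
  set σ2 : Equiv.Perm (ZMod 3) :=
    (Equiv.ofBijective (f 0) b2).symm.trans (Equiv.neg (ZMod 3)) with hσ2
  set h : ZMod 3 → ZMod 3 → ZMod 3 := fun a b => σ2 (f a b) with hh
  have h0 : ∀ b, h 0 b = -b := by
    intro b
    have e1 : (Equiv.ofBijective (f 0) b2).symm (f 0 b) = b := by
      rw [show f 0 b = Equiv.ofBijective (f 0) b2 b from rfl, Equiv.symm_apply_apply]
    show -((Equiv.ofBijective (f 0) b2).symm (f 0 b)) = -b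
    rw [e1]
  have hrow' : ∀ a, Function.Injective (h a) := fun a => σ2.injective.comp (hrow a)
  have hcol' : ∀ b, Function.Injective (fun a => h a b) := fun b => σ2.injective.comp (hcol b)
  have b0 : Function.Bijective (fun a => h a 0) := Finite.injective_iff_bijective.1 (hcol' 0)
  set σ0 : Equiv.Perm (ZMod 3) :=
    (Equiv.ofBijective _ b0).trans (Equiv.neg (ZMod 3)) with hσ0
  have hσ0v : ∀ a, σ0 a = -(h a 0) := fun a => rfl
  have c0 : h 0 0 = 0 := by rw [h0]; ring
  have c1 : h 0 1 = -1 := h0 1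
  have c2 : h 0 2 = -2 := h0 2
  have ne01 : (0:ZMod 3) ≠ 1 := by decide
  have ne02 : (0:ZMod 3) ≠ 2 := by decide
  have ne12 : (1:ZMod 3) ≠ 2 := by decide
  have hk : ∀ a b, h a b = h a 0 - b := by
    obtain ⟨e1, e2, e3, e4⟩ := key6 (h 1 0) (h 1 1) (h 1 2) (h 2 0) (h 2 1) (h 2 2)
      (fun e => ne01 (hrow' 1 e)) (fun e => ne02 (hrow' 1 e)) (fun e => ne12 (hrow' 1 e))
      (fun e => ne01 (hrow' 2 e)) (fun e => ne02 (hrow' 2 e)) (fun e => ne12 (hrow' 2 e))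
      (fun e => ne01 (hcol' 0 (show h 0 0 = h 1 0 by rw [c0]; exact e)))
      (fun e => ne12 (hcol' 0 e))
      (fun e => ne02 (hcol' 0 (show h 0 0 = h 2 0 by rw [c0]; exact e)))
      (fun e => ne01 (hcol' 1 (show h 0 1 = h 1 1 by rw [c1]; exact e)))
      (fun e => ne12 (hcol' 1 e))
      (fun e => ne02 (hcol' 1 (show h 0 1 = h 2 1 by rw [c1]; exact e)))
      (fun e => ne01 (hcol' 2 (show h 0 2 = h 1 2 by rw [c2]; exact e)))
      (fun e => ne12 (hcol' 2 e))
      (fun e => ne02 (hcol' 2 (show h 0 2 = h 2 2 by rw [c2]; exact e)))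
    intro a b
    have h3 : ∀ c : ZMod 3, c = 0 ∨ c = 1 ∨ c = 2 := by decide
    rcases h3 a with rfl | rfl | rfl <;> rcases h3 b with rfl | rfl | rfl <;>
      simp [h0, e1, e2, e3, e4]
  refine ⟨σ0, 1, σ2, fun a b => ?_⟩
  have hab : σ2 (f a b) = h a b := rfl
  rw [hab, hk a b, hσ0v a]
  show -(h a 0) + b + (h a 0 - b) = 0
  ring

/-- Let `S ⊆ F_3^3` consist of 9 vectors with pairwise Hamming distance at least 2,
containing two vectors at Hamming distance exactly 2. Then, up to permuting the symbols
in each coordinate, `S` is the set `{x : x_1 + x_2 + x_3 = 0}`. -/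
theorem nine_points_distance_two (S : Finset (Fin 3 → ZMod 3))
    (hcard : S.card = 9)
    (hdist : ∀ x ∈ S, ∀ y ∈ S, x ≠ y → 2 ≤ hammingDist x y)
    (hex : ∃ x ∈ S, ∃ y ∈ S, hammingDist x y = 2) :
    ∃ σ : Fin 3 → Equiv.Perm (ZMod 3),
      S.image (fun x i => σ i (x i)) =
        Finset.univ.filter (fun x : Fin 3 → ZMod 3 => x 0 + x 1 + x 2 = 0) := by
  have hle : ∀ (x y : Fin 3 → ZMod 3) (i : Fin 3), (∀ j, j ≠ i → x j = y j) →
      hammingDist x y ≤ 1 := by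
    intro x y i hagree
    unfold hammingDist
    refine le_trans (Finset.card_le_card (t := ({i} : Finset (Fin 3))) (fun j hj => ?_)) (by simp)
    simp only [Finset.mem_filter] at hj
    simp only [Finset.mem_singleton]
    by_contra hne
    exact hj.2 (hagree j hne)
  have himg : S.image (fun x => (x 0, x 1)) = Finset.univ := by
    have hinj : Set.InjOn (fun x : Fin 3 → ZMod 3 => (x 0, x 1)) S := by
      intro x hx y hy hxy
      by_contra hne
      have h2 := hdist x hx y hy hne
      have hx0 : x 0 = y 0 := congrArg Prod.fst hxy
      have hx1 : x 1 = y 1 := congrArg Prod.snd hxy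
      have h1 := hle x y 2 (fun j hj => by fin_cases j <;> simp_all)
      omega
    apply Finset.eq_of_subset_of_card_le (Finset.subset_univ _)
    rw [Finset.card_image_of_injOn hinj, hcard]
    simp
  have hsurj : ∀ a b : ZMod 3, ∃ x, x ∈ S ∧ x 0 = a ∧ x 1 = b := by
    intro a b
    have : (a, b) ∈ S.image (fun x => (x 0, x 1)) := himg ▸ Finset.mem_univ _
    obtain ⟨x, hx, he⟩ := Finset.mem_image.1 this
    exact ⟨x, hx, congrArg Prod.fst he, congrArg Prod.snd he⟩
  set f : ZMod 3 → ZMod 3 → ZMod 3 := fun a b => (hsurj a b).choose 2 with hfdef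
  have hfS : ∀ a b : ZMod 3, (hsurj a b).choose ∈ S ∧ (hsurj a b).choose 0 = a ∧
      (hsurj a b).choose 1 = b := fun a b => (hsurj a b).choose_spec
  have hfx : ∀ x ∈ S, x 2 = f (x 0) (x 1) := by
    intro x hx
    obtain ⟨hyS, hy0, hy1⟩ := hfS (x 0) (x 1)
    have hxy : x = (hsurj (x 0) (x 1)).choose := by
      by_contra hne
      have h2 := hdist x hx _ hyS hne
      have h1 := hle x (hsurj (x 0) (x 1)).choose 2 (fun j hj => by fin_cases j <;> simp_all)
      omega
    show x 2 = (hsurj (x 0) (x 1)).choose 2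
    rw [← hxy]
  have hrow : ∀ a, Function.Injective (f a) := by
    intro a b b' he
    by_contra hne
    obtain ⟨hxS, hx0, hx1⟩ := hfS a b
    obtain ⟨hyS, hy0, hy1⟩ := hfS a b'
    have hxyne : (hsurj a b).choose ≠ (hsurj a b').choose := fun e =>
      hne (by rw [← hx1, ← hy1, e])
    have h2 := hdist _ hxS _ hyS hxyne
    have h1 := hle (hsurj a b).choose (hsurj a b').choose 1 (fun j hj => by
      fin_cases j
      · exact hx0.trans hy0.symm
      · exact absurd rfl hj
      · exact he)
    omega
  have hcol : ∀ b, Function.Injective (fun a => f a b) := by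
    intro b a a' he
    by_contra hne
    obtain ⟨hxS, hx0, hx1⟩ := hfS a b
    obtain ⟨hyS, hy0, hy1⟩ := hfS a' b
    have hxyne : (hsurj a b).choose ≠ (hsurj a' b).choose := fun e =>
      hne (by rw [← hx0, ← hy0, e])
    have h2 := hdist _ hxS _ hyS hxyne
    have h1 := hle (hsurj a b).choose (hsurj a' b).choose 0 (fun j hj => by
      fin_cases j
      · exact absurd rfl hj
      · exact hx1.trans hy1.symm
      · exact he)
    omega
  obtain ⟨σ0, σ1, σ2, hid⟩ := latin_iso f hrow hcol
  refine ⟨![σ0, σ1, σ2], ?_⟩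
  have hinj2 : Function.Injective
      (fun (x : Fin 3 → ZMod 3) (i : Fin 3) => (![σ0, σ1, σ2]) i (x i)) := by
    intro x y he
    funext i
    exact Equiv.injective _ (congrFun he i)
  apply Finset.eq_of_subset_of_card_le
  · intro y hy
    obtain ⟨x, hx, rfl⟩ := Finset.mem_image.1 hy
    simp only [Finset.mem_filter, Finset.mem_univ, true_and]
    show σ0 (x 0) + σ1 (x 1) + σ2 (x 2) = 0
    rw [hfx x hx]
    exact hid (x 0) (x 1)
  · rw [Finset.card_image_of_injective S hinj2, hcard]
    have h9 : (Finset.univ.filter (fun x : Fin 3 → ZMod 3 => x 0 + x 1 + x 2 = 0)).card = 9 := by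
      decide
    exact h9.le
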